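/- Let π be a finite path in a directed graph. A vertex r is called a root if it has the minimum discovery index in its SCC of G_π. Then the SCCs of G_π, ordered by the discovery indices of their roots, partition the visited vertices into consecutive intervals of discovery indices: for consecutive roots r_i, r_{i+1}, the SCC of r_i is exactly the set of vertices s with d_π(r_i) ≤ d_π(s) < d_π(r_{i+1}). -/

import Mathlib

def ListAdj {V : Type*} (π : List V) (a b : V) : Prop := (a, b) ∈ π.zip π.tail

def DIdx {V : Type*} [DecidableEq V] (π : List V) (s : V) : ℕ :=
  ((π.take (π.idxOf s + 1)).toFinset).card

def SameSCC {V : Type*} (r : V → V → Prop) (a b : V) : Prop :=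
  Relation.ReflTransGen r a b ∧ Relation.ReflTransGen r b a

/-- A root of the traversed graph of `π`: a visited vertex of minimum discovery index
in its SCC. -/
def IsRoot {V : Type*} [DecidableEq V] (π : List V) (r : V) : Prop :=
  r ∈ π ∧ ∀ s ∈ π, SameSCC (ListAdj π) r s → DIdx π r ≤ DIdx π s

section Aux
variable {V : Type*} [DecidableEq V] {π : List V} {s t : V}

lemma indexOf_le_of_getElem {l : List V} {j : ℕ} {a : V} (hj : j < l.length)
    (h : l[j] = a) : l.idxOf a ≤ j := by
  by_contra hc
  push_neg at hc
  have : l.idxOf a = l.findIdx (· == a) := rfl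
  rw [this] at hc
  have := List.not_of_lt_findIdx hc
  simp [h] at this

lemma toFinset_subset_of_subset {l l' : List V} (h : l ⊆ l') : l.toFinset ⊆ l'.toFinset := by
  intro x hx; rw [List.mem_toFinset] at *; exact h hx

lemma didx_mono (h : π.idxOf s ≤ π.idxOf t) : DIdx π s ≤ DIdx π t :=
  Finset.card_le_card (toFinset_subset_of_subset
    (List.take_subset_take_left π (by omega)))

lemma didx_strict (ht : t ∈ π) (h : π.idxOf s < π.idxOf t) : DIdx π s < DIdx π t := by
  have htl : π.idxOf t < π.length := List.idxOf_lt_length_iff.2 ht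
  apply Finset.card_lt_card
  constructor
  · exact toFinset_subset_of_subset (List.take_subset_take_left π (by omega))
  · intro hsub
    have hmem : t ∈ (π.take (π.idxOf t + 1)).toFinset := by
      rw [List.mem_toFinset]
      have hlen : π.idxOf t < (π.take (π.idxOf t + 1)).length := by
        simp [htl]
      have heq : (π.take (π.idxOf t + 1))[π.idxOf t] = t :=
        (List.getElem_take).trans (List.getElem_idxOf htl)
      have hm := List.getElem_mem hlen
      rw [heq] at hm
      exact hm
    have := hsub hmem
    rw [List.mem_toFinset] at this
    obtain ⟨j, hj, hjt⟩ := List.mem_iff_getElem.1 this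
    have hjlen : j < π.length := by
      have := hj; simp at this; omega
    have hjs : j < π.idxOf s + 1 := by
      have := hj; simp at this; omega
    have hpj : π[j] = t := (List.getElem_take).symm.trans hjt
    have := indexOf_le_of_getElem hjlen hpj
    omega

lemma didx_le_iff (hs : s ∈ π) (ht : t ∈ π) :
    DIdx π s ≤ DIdx π t ↔ π.idxOf s ≤ π.idxOf t := by
  constructor
  · intro h
    by_contra hc
    push_neg at hc
    exact absurd h (not_le.2 (didx_strict hs hc))
  · exact didx_mono

lemma didx_lt_iff (hs : s ∈ π) (ht : t ∈ π) :
    DIdx π s < DIdx π t ↔ π.idxOf s < π.idxOf t := by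
  rw [← not_le, ← not_le, didx_le_iff ht hs]

/-- Forward reachability along the path. -/
lemma reach_of_le {i j : ℕ} (hij : i ≤ j) (hj : j < π.length) :
    Relation.ReflTransGen (ListAdj π) π[i] π[j] := by
  induction j with
  | zero =>
    have : i = 0 := by omega
    subst this; exact Relation.ReflTransGen.refl
  | succ n ih =>
    rcases Nat.lt_or_ge i (n + 1) with h | h
    · have hn : n < π.length := by omega
      refine (ih (by omega) hn).tail ?_
      show (π[n], π[n+1]) ∈ π.zip π.tail
      have hzlen : n < (π.zip π.tail).length := by
        simp [List.length_zip, List.length_tail]; omega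
      have : (π.zip π.tail)[n] = (π[n], π.tail[n]'(by simp [List.length_tail]; omega)) :=
        List.getElem_zip
      have ht : π.tail[n]'(by simp [List.length_tail]; omega) = π[n+1] := by
        simp [List.getElem_tail]
      rw [ht] at this
      exact this ▸ List.getElem_mem hzlen
    · have : i = n + 1 := by omega
      subst this; exact Relation.ReflTransGen.refl

lemma reach_of_indexOf_le (hs : s ∈ π) (ht : t ∈ π) (h : π.idxOf s ≤ π.idxOf t) :
    Relation.ReflTransGen (ListAdj π) s t := by
  have hsl := List.idxOf_lt_length_iff.2 hs
  have htl := List.idxOf_lt_length_iff.2 ht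
  have := reach_of_le (π := π) h htl
  rwa [List.getElem_idxOf hsl, List.getElem_idxOf htl] at this

lemma sameSCC_symm {r : V → V → Prop} {a b : V} (h : SameSCC r a b) : SameSCC r b a :=
  ⟨h.2, h.1⟩

lemma sameSCC_trans {r : V → V → Prop} {a b c : V} (h1 : SameSCC r a b)
    (h2 : SameSCC r b c) : SameSCC r a c :=
  ⟨h1.1.trans h2.1, h2.2.trans h1.2⟩

/-- Every visited vertex has a root in its SCC. -/
lemma exists_root (hs : s ∈ π) :
    ∃ r'', IsRoot π r'' ∧ SameSCC (ListAdj π) r'' s := by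
  classical
  let T : Finset V := π.toFinset.filter (fun t => SameSCC (ListAdj π) s t)
  have hsT : s ∈ T := by
    simp only [T, Finset.mem_filter, List.mem_toFinset]
    exact ⟨hs, Relation.ReflTransGen.refl, Relation.ReflTransGen.refl⟩
  obtain ⟨m, hmT, hmin⟩ := T.exists_min_image (DIdx π) ⟨s, hsT⟩
  simp only [T, Finset.mem_filter, List.mem_toFinset] at hmT
  refine ⟨m, ⟨hmT.1, ?_⟩, sameSCC_symm hmT.2⟩
  intro t htπ hmt
  apply hmin
  simp only [T, Finset.mem_filter, List.mem_toFinset]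
  exact ⟨htπ, sameSCC_trans hmT.2 hmt⟩

end Aux

/-- The SCCs of the graph traversed by a path are contiguous intervals in discovery
order: for consecutive roots `r`, `r'`, the SCC of `r` is exactly the set of visited
vertices with discovery index in `[d(r), d(r'))`. -/
theorem stmt18 {V : Type*} [DecidableEq V] (π : List V)
    (r r' : V) (hr : IsRoot π r) (hr' : IsRoot π r')
    (hlt : DIdx π r < DIdx π r')
    (hcons : ∀ r'' : V, IsRoot π r'' →
      ¬ (DIdx π r < DIdx π r'' ∧ DIdx π r'' < DIdx π r')) :
    {s | s ∈ π ∧ SameSCC (ListAdj π) r s} =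
      {s | s ∈ π ∧ DIdx π r ≤ DIdx π s ∧ DIdx π s < DIdx π r'} := by
  have hrπ := hr.1
  have hr'π := hr'.1
  ext s
  simp only [Set.mem_setOf_eq]
  constructor
  · rintro ⟨hsπ, hscc⟩
    refine ⟨hsπ, hr.2 s hsπ hscc, ?_⟩
    by_contra hc
    push_neg at hc
    -- r' reaches s, s reaches r, r reaches r' : so r' ∈ SCC(r), contradiction with hlt
    have h1 : Relation.ReflTransGen (ListAdj π) r' s :=
      reach_of_indexOf_le hr'π hsπ ((didx_le_iff hr'π hsπ).1 hc)
    have h2 : Relation.ReflTransGen (ListAdj π) r r' :=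
      reach_of_indexOf_le hrπ hr'π ((didx_le_iff hrπ hr'π).1 (le_of_lt hlt))
    have hscc' : SameSCC (ListAdj π) r' r := ⟨h1.trans hscc.2, h2⟩
    have := hr'.2 r hrπ hscc'
    omega
  · rintro ⟨hsπ, hle, hlt'⟩
    refine ⟨hsπ, ?_⟩
    obtain ⟨r'', hroot, hscc⟩ := exists_root hsπ
    have hr''π := hroot.1
    have hr''s : DIdx π r'' ≤ DIdx π s := hroot.2 s hsπ hscc
    have hcase : DIdx π r'' ≤ DIdx π r := by
      by_contra hc
      push_neg at hc
      exact hcons r'' hroot ⟨hc, lt_of_le_of_lt hr''s hlt'⟩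
    -- r reaches s forward; s reaches r'' (SCC), r'' reaches r forward
    have h1 : Relation.ReflTransGen (ListAdj π) r s :=
      reach_of_indexOf_le hrπ hsπ ((didx_le_iff hrπ hsπ).1 hle)
    have h2 : Relation.ReflTransGen (ListAdj π) r'' r :=
      reach_of_indexOf_le hr''π hrπ ((didx_le_iff hr''π hrπ).1 hcase)
    exact ⟨h1, hscc.2.trans h2⟩
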